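/- Let A : H → Set H be maximal monotone such that I + λA is surjective for every λ > 0, and for λ > 0 and x ∈ H let J_{λA}(x) denote the unique point v ∈ H with x ∈ v + λA(v). Let B : H → H be monotone and continuous, and fix s > 0, μ ∈ (0,1), σ ∈ (0,1). Then for every w ∈ H there exists a nonnegative integer j such that, with λ = sμ^j and v = J_{λA}(w − λB(w)), the line-search condition λ‖B(w) − B(v)‖ ≤ σ‖w − v‖ holds. -/
import Mathlib


open RealInnerProductSpace

/-- For a maximal monotone operator `A` with `I + λA` surjective for every
`λ > 0` (so that the resolvent `J_{λA}` is well defined) and a monotone continuous `B`,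
the Armijo-type line search terminates: for every `w` there is a nonnegative integer `j`
such that, with `λ = s μ^j` and `v = J_{λA}(w - λ B w)`, one has
`λ‖B w - B v‖ ≤ σ‖w - v‖`. -/
theorem linesearch_terminates
    {H : Type*} [NormedAddCommGroup H] [InnerProductSpace ℝ H] [CompleteSpace H]
    (A : H → Set H) (B : H → H)
    (hAmono : ∀ u v : H, ∀ a ∈ A u, ∀ b ∈ A v, 0 ≤ ⟪a - b, u - v⟫)
    (hAmax : ∀ u v : H, (∀ w : H, ∀ z ∈ A w, 0 ≤ ⟪u - w, v - z⟫) → v ∈ A u)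
    (hsurj : ∀ lam : ℝ, 0 < lam → ∀ x : H, ∃ v : H, ∃ a ∈ A v, x = v + lam • a)
    (hBmono : ∀ u v : H, 0 ≤ ⟪B u - B v, u - v⟫)
    (hBcont : Continuous B)
    (s μ σ : ℝ) (hs : 0 < s) (hμ : μ ∈ Set.Ioo (0 : ℝ) 1) (hσ : σ ∈ Set.Ioo (0 : ℝ) 1)
    (w : H) :
    ∃ j : ℕ, ∃ v : H, (∃ a ∈ A v, w - (s * μ ^ j) • B w = v + (s * μ ^ j) • a) ∧
      (s * μ ^ j) * ‖B w - B v‖ ≤ σ * ‖w - v‖ := by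
  obtain ⟨hμ0, hμ1⟩ := hμ
  obtain ⟨hσ0, hσ1⟩ := hσ
  set lam : ℕ → ℝ := fun j => s * μ ^ j with hlam
  have hlampos : ∀ j, 0 < lam j := fun j => by positivity
  have hlamanti : ∀ j k, j ≤ k → lam k ≤ lam j := by
    intro j k hjk
    exact mul_le_mul_of_nonneg_left
      (pow_le_pow_of_le_one hμ0.le hμ1.le hjk) hs.le
  -- choose the resolvent points
  have hchoice : ∀ j : ℕ, ∃ v : H, ∃ a : H, a ∈ A v ∧
      w - lam j • B w = v + lam j • a := by
    intro j
    obtain ⟨v, a, ha, heq⟩ := hsurj (lam j) (hlampos j) (w - lam j • B w)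
    exact ⟨v, a, ha, heq⟩
  choose v a hamem heq using hchoice
  set e : ℕ → H := fun j => w - v j with he
  have hla : ∀ j, lam j • a j = e j - lam j • B w := by
    intro j
    have h := heq j
    simp only [he]
    linear_combination (norm := module) -h
  -- key inner product inequality (symmetric in j, k)
  have hI : ∀ j k, lam j * ‖e k‖ ^ 2 + lam k * ‖e j‖ ^ 2
      ≤ (lam j + lam k) * ⟪e j, e k⟫ := by
    intro j k
    have h0 := hAmono (v k) (v j) (a k) (hamem k) (a j) (hamem j)
    have h1 : 0 ≤ ⟪(lam j * lam k) • (a k - a j), v k - v j⟫ := by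
      rw [real_inner_smul_left]
      exact mul_nonneg (by positivity) h0
    have h2 : (lam j * lam k) • (a k - a j) = lam j • e k - lam k • e j := by
      have hk := hla k
      have hj := hla j
      linear_combination (norm := module) lam j • hk - lam k • hj
    have h3 : v k - v j = e j - e k := by simp only [he]; abel
    rw [h2, h3] at h1
    have h4 : ⟪lam j • e k - lam k • e j, e j - e k⟫
        = lam j * ⟪e k, e j⟫ - lam j * ⟪e k, e k⟫
          - (lam k * ⟪e j, e j⟫ - lam k * ⟪e j, e k⟫) := by
      simp only [inner_sub_left, inner_sub_right, real_inner_smul_left]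
      ring
    rw [h4, real_inner_self_eq_norm_sq, real_inner_self_eq_norm_sq] at h1
    have hcomm : ⟪e k, e j⟫ = ⟪e j, e k⟫ := real_inner_comm _ _
    rw [hcomm] at h1
    linarith [h1]
  have hCS : ∀ j k, ⟪e j, e k⟫ ≤ ‖e j‖ * ‖e k‖ := fun j k => real_inner_le_norm _ _
  -- norms are nonincreasing
  have hmono : ∀ j k, j ≤ k → ‖e k‖ ≤ ‖e j‖ := by
    intro j k hjk
    by_contra hba
    push_neg at hba
    have hI' := hI j k
    have hcs := hCS j k
    have hlk := hlamanti j k hjk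
    have h1 : (lam j + lam k) * ⟪e j, e k⟫ ≤ (lam j + lam k) * (‖e j‖ * ‖e k‖) :=
      mul_le_mul_of_nonneg_left hcs (by positivity)
    have key : 0 < (‖e k‖ - ‖e j‖) * (lam j * ‖e k‖ - lam k * ‖e j‖) := by
      apply mul_pos (sub_pos.2 hba)
      have h2 : lam k * ‖e j‖ < lam k * ‖e k‖ :=
        mul_lt_mul_of_pos_left hba (hlampos k)
      have h3 : lam k * ‖e k‖ ≤ lam j * ‖e k‖ :=
        mul_le_mul_of_nonneg_right hlk (norm_nonneg _)
      linarith
    nlinarith [key, h1, hI']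
  -- ratio bound
  have hratio : ∀ k, lam k * ‖e 0‖ ≤ lam 0 * ‖e k‖ := by
    intro k
    by_contra hba
    push_neg at hba
    have hI' := hI 0 k
    have hcs := hCS 0 k
    have hlk := hlamanti 0 k (Nat.zero_le k)
    have h1 : (lam 0 + lam k) * ⟪e 0, e k⟫ ≤ (lam 0 + lam k) * (‖e 0‖ * ‖e k‖) :=
      mul_le_mul_of_nonneg_left hcs (by positivity)
    have hlt : ‖e k‖ < ‖e 0‖ := by
      have h2 : lam 0 * ‖e k‖ < lam 0 * ‖e 0‖ := by
        calc lam 0 * ‖e k‖ < lam k * ‖e 0‖ := hba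
        _ ≤ lam 0 * ‖e 0‖ := mul_le_mul_of_nonneg_right hlk (norm_nonneg _)
      exact lt_of_mul_lt_mul_left h2 (hlampos 0).le
    have key : 0 < (‖e 0‖ - ‖e k‖) * (lam k * ‖e 0‖ - lam 0 * ‖e k‖) :=
      mul_pos (sub_pos.2 hlt) (sub_pos.2 hba)
    nlinarith [key, h1, hI']
  -- difference bound
  have hdiff : ∀ j k, j ≤ k → ‖e j - e k‖ ^ 2 ≤ ‖e j‖ ^ 2 - ‖e k‖ ^ 2 := by
    intro j k hjk
    have hI' := hI j k
    have hm := hmono j k hjk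
    have hexp : ‖e j - e k‖ ^ 2 = ‖e j‖ ^ 2 - 2 * ⟪e j, e k⟫ + ‖e k‖ ^ 2 :=
      norm_sub_sq_real (e j) (e k)
    have hab : ‖e k‖ ^ 2 ≤ ‖e j‖ ^ 2 := pow_le_pow_left₀ (norm_nonneg _) hm 2
    have h5 : (lam j + lam k) * ‖e k‖ ^ 2 ≤ (lam j + lam k) * ⟪e j, e k⟫ := by
      have : lam k * ‖e k‖ ^ 2 ≤ lam k * ‖e j‖ ^ 2 :=
        mul_le_mul_of_nonneg_left hab (hlampos k).le
      nlinarith [hI']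
    have h6 : ‖e k‖ ^ 2 ≤ ⟪e j, e k⟫ :=
      le_of_mul_le_mul_left h5 (by positivity)
    linarith
  -- the norms converge to the infimum c
  set c : ℝ := ⨅ j, ‖e j‖ with hc
  have hbdd : BddBelow (Set.range fun j => ‖e j‖) :=
    ⟨0, by rintro x ⟨j, rfl⟩; exact norm_nonneg _⟩
  have hanti : Antitone fun j => ‖e j‖ := fun j k hjk => hmono j k hjk
  have hdconv : Filter.Tendsto (fun j => ‖e j‖) Filter.atTop (nhds c) :=
    tendsto_atTop_ciInf hanti hbdd
  have hcle : ∀ j, c ≤ ‖e j‖ := fun j => ciInf_le hbdd j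
  have hc0 : 0 ≤ c := le_ciInf fun j => norm_nonneg _
  -- e is a Cauchy sequence
  have hcauchy : CauchySeq e := by
    rw [Metric.cauchySeq_iff']
    intro ε hε
    have hsq : Filter.Tendsto (fun j => ‖e j‖ ^ 2) Filter.atTop (nhds (c ^ 2)) :=
      hdconv.pow 2
    obtain ⟨N, hN⟩ := (Metric.tendsto_atTop.1 hsq) (ε ^ 2) (by positivity)
    refine ⟨N, fun n hn => ?_⟩
    have h1 : ‖e N - e n‖ ^ 2 ≤ ‖e N‖ ^ 2 - ‖e n‖ ^ 2 := hdiff N n hn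
    have a1 := hN N le_rfl
    rw [Real.dist_eq] at a1
    have a1' := abs_lt.1 a1
    have hcn : c ^ 2 ≤ ‖e n‖ ^ 2 := by
      have := hcle n
      nlinarith [hc0]
    have h2 : ‖e N - e n‖ ^ 2 < ε ^ 2 := by linarith [a1'.2]
    have h3 : ‖e n - e N‖ = ‖e N - e n‖ := norm_sub_rev _ _
    rw [dist_eq_norm, h3]
    by_contra hx
    push_neg at hx
    nlinarith [norm_nonneg (e N - e n)]
  obtain ⟨L, hL⟩ := cauchySeq_tendsto_of_complete hcauchy
  have hv : Filter.Tendsto v Filter.atTop (nhds (w - L)) := by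
    have hve : v = fun j => w - e j := by
      funext j; simp only [he]; abel
    rw [hve]
    exact tendsto_const_nhds.sub hL
  have hBv : Filter.Tendsto (fun j => B (v j)) Filter.atTop (nhds (B (w - L))) :=
    (hBcont.tendsto (w - L)).comp hv
  have hlam0 : Filter.Tendsto lam Filter.atTop (nhds 0) := by
    have h := tendsto_pow_atTop_nhds_zero_of_lt_one hμ0.le hμ1
    have := h.const_mul s
    simpa [hlam] using this
  have hwv : ∀ j, ‖w - v j‖ = ‖e j‖ := fun j => by simp only [he]
  -- case analysis
  by_cases h0 : e 0 = 0
  · -- v 0 = w, line search trivially holds at j = 0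
    refine ⟨0, v 0, ⟨a 0, hamem 0, by simpa [hlam] using heq 0⟩, ?_⟩
    have hw0 : v 0 = w := by
      have : w - v 0 = 0 := h0
      rw [sub_eq_zero] at this
      exact this.symm
    simp [hw0]
  · have hK : 0 < ‖e 0‖ := norm_pos_iff.2 h0
    rcases lt_or_eq_of_le hc0 with hcpos | hczero
    · -- c > 0 : lam j * ‖Bw - Bv j‖ → 0 < σ c ≤ σ ‖e j‖
      have hten : Filter.Tendsto (fun j => lam j * ‖B w - B (v j)‖)
          Filter.atTop (nhds 0) := by
        have h1 : Filter.Tendsto (fun j => ‖B w - B (v j)‖) Filter.atTop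
            (nhds ‖B w - B (w - L)‖) := (tendsto_const_nhds.sub hBv).norm
        have := hlam0.mul h1
        simpa using this
      have hev : ∀ᶠ j in Filter.atTop, lam j * ‖B w - B (v j)‖ < σ * c := by
        have hpos : (0 : ℝ) < σ * c := mul_pos hσ0 hcpos
        exact hten.eventually_lt_const hpos
      obtain ⟨j, hj⟩ := hev.exists
      refine ⟨j, v j, ⟨a j, hamem j, heq j⟩, ?_⟩
      have h2 : σ * c ≤ σ * ‖e j‖ := mul_le_mul_of_nonneg_left (hcle j) hσ0.le
      rw [hwv j] at *
      calc (s * μ ^ j) * ‖B w - B (v j)‖ ≤ σ * c := hj.le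
        _ ≤ σ * ‖e j‖ := h2
        _ = σ * ‖w - v j‖ := by rw [hwv j]
    · -- c = 0 : v j → w, so ‖Bw - Bv j‖ → 0; use the ratio bound
      have hdz : Filter.Tendsto (fun j => ‖e j‖) Filter.atTop (nhds 0) := by
        rw [hczero]; exact hdconv
      have hez : Filter.Tendsto e Filter.atTop (nhds 0) :=
        tendsto_zero_iff_norm_tendsto_zero.2 hdz
      have hLz : L = 0 := tendsto_nhds_unique hL hez
      have hBz : Filter.Tendsto (fun j => ‖B w - B (v j)‖) Filter.atTop (nhds 0) := by
        have h1 : Filter.Tendsto (fun j => ‖B w - B (v j)‖) Filter.atTop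
            (nhds ‖B w - B (w - L)‖) := (tendsto_const_nhds.sub hBv).norm
        rw [hLz] at h1
        simpa using h1
      have hKpos : (0 : ℝ) < σ * (‖e 0‖ / lam 0) := by
        apply mul_pos hσ0 (div_pos hK (hlampos 0))
      have hev : ∀ᶠ j in Filter.atTop,
          ‖B w - B (v j)‖ < σ * (‖e 0‖ / lam 0) := by
        exact hBz.eventually_lt_const hKpos
      obtain ⟨j, hj⟩ := hev.exists
      refine ⟨j, v j, ⟨a j, hamem j, heq j⟩, ?_⟩
      have hr := hratio j
      have step1 : lam j * ‖B w - B (v j)‖ ≤ lam j * (σ * (‖e 0‖ / lam 0)) :=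
        mul_le_mul_of_nonneg_left hj.le (hlampos j).le
      have step2 : lam j * (σ * (‖e 0‖ / lam 0)) ≤ σ * ‖e j‖ := by
        rw [div_eq_mul_inv]
        have h10 : (lam 0)⁻¹ * (lam j * ‖e 0‖) ≤ (lam 0)⁻¹ * (lam 0 * ‖e j‖) :=
          mul_le_mul_of_nonneg_left hr (by positivity)
        rw [inv_mul_cancel_left₀ (hlampos 0).ne'] at h10
        calc lam j * (σ * (‖e 0‖ * (lam 0)⁻¹)) = σ * ((lam 0)⁻¹ * (lam j * ‖e 0‖)) := by ring
          _ ≤ σ * ‖e j‖ := mul_le_mul_of_nonneg_left h10 hσ0.le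
      calc (s * μ ^ j) * ‖B w - B (v j)‖ ≤ σ * ‖e j‖ := le_trans step1 step2
        _ = σ * ‖w - v j‖ := by rw [hwv j]
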